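/- Suppose K is a field with more than two elements and S is a spanning subset of X, with {S_i}_{i∈I} the connected components of G(S). Then two elements x, y ∈ X belong to the same orbit of the transvection group Tr(S) if and only if y − x belongs to the span of the union of all components S_i such that neither ω(x, S_i) = {0} nor ω(y, S_i) = {0} (i.e., such that ω(x,s) ≠ 0 for some s ∈ S_i and ω(y,s) ≠ 0 for some s ∈ S_i). -/

import Mathlib

/-- Symplectic transvections as permutations. -/
def transvectionSet {K X : Type*} [Field K] [AddCommGroup X] [Module K X]
    (ω : X →ₗ[K] X →ₗ[K] K) (S : Set X) : Set (Equiv.Perm X) :=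
  {f | ∃ s ∈ S, ∃ k : K, k ≠ 0 ∧ ∀ x, f x = x + (k * ω x s) • s}

/-- The transvection group `Tr(S)`. -/
def transvectionGroup {K X : Type*} [Field K] [AddCommGroup X] [Module K X]
    (ω : X →ₗ[K] X →ₗ[K] K) (S : Set X) : Subgroup (Equiv.Perm X) :=
  Subgroup.closure (transvectionSet ω S)

/-- The graph `G(S)`. -/
def transGraph {K X : Type*} [Field K] [AddCommGroup X] [Module K X]
    (ω : X →ₗ[K] X →ₗ[K] K) (S : Set X) : SimpleGraph S :=
  SimpleGraph.fromRel (fun u v => ω u.1 v.1 ≠ 0)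

/-- The union of all connected components `S_i` of `G(S)` such that
`ω(x, S_i) ≠ {0}` and `ω(y, S_i) ≠ {0}`, i.e. the set of elements of `S`
whose component contains both some `t` with `ω(x,t) ≠ 0` and some `t'` with
`ω(y,t') ≠ 0`. -/
def relevantUnion {K X : Type*} [Field K] [AddCommGroup X] [Module K X]
    (ω : X →ₗ[K] X →ₗ[K] K) (S : Set X) (x y : X) : Set X :=
  {s : X | ∃ hs : s ∈ S,
    (∃ t : S, (transGraph ω S).connectedComponentMk t =
        (transGraph ω S).connectedComponentMk ⟨s, hs⟩ ∧ ω x t.1 ≠ 0) ∧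
    (∃ t : S, (transGraph ω S).connectedComponentMk t =
        (transGraph ω S).connectedComponentMk ⟨s, hs⟩ ∧ ω y t.1 ≠ 0)}

theorem Equiv.Perm.inv_apply_self {α : Type*} (f : Equiv.Perm α) (x : α) : f⁻¹ (f x) = x :=
  Equiv.symm_apply_apply f x

theorem Equiv.Perm.apply_inv_self {α : Type*} (f : Equiv.Perm α) (x : α) : f (f⁻¹ x) = x :=
  Equiv.apply_symm_apply f x

namespace Stmt19Aux

variable {K X : Type*} [Field K] [AddCommGroup X] [Module K X]
variable (ω : X →ₗ[K] X →ₗ[K] K) (S : Set X)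

lemma skew (halt : ∀ x, ω x x = 0) (a b : X) : ω a b = - ω b a := by
  have h := halt (a + b)
  simp only [map_add, LinearMap.add_apply, halt, add_zero, zero_add] at h
  linear_combination h

lemma exists_ne_ne (hK : ∃ k : K, k ≠ 0 ∧ k ≠ 1) (a b : K) : ∃ k : K, k ≠ a ∧ k ≠ b := by
  obtain ⟨e, he0, he1⟩ := hK
  by_cases ha : a = 0
  · by_cases hb : b = 1
    · exact ⟨e, by rw [ha]; exact he0, by rw [hb]; exact he1⟩
    · exact ⟨1, by rw [ha]; exact one_ne_zero, fun h => hb h.symm⟩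
  · by_cases hb : b = 0
    · by_cases ha1 : a = 1
      · exact ⟨e, by rw [ha1]; exact he1, by rw [hb]; exact he0⟩
      · exact ⟨1, fun h => ha1 h.symm, by rw [hb]; exact one_ne_zero⟩
    · exact ⟨0, fun h => ha h.symm, fun h => hb h.symm⟩

def tperm (halt : ∀ x, ω x x = 0) (s : X) (k : K) : Equiv.Perm X where
  toFun x := x + (k * ω x s) • s
  invFun x := x + (-(k * ω x s)) • s
  left_inv x := by
    show (x + (k * ω x s) • s) + _ • s = x
    have h : ω (x + (k * ω x s) • s) s = ω x s := by
      simp [map_add, map_smul, halt]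
    rw [h]; module
  right_inv x := by
    show (x + (-(k * ω x s)) • s) + _ • s = x
    have h : ω (x + (-(k * ω x s)) • s) s = ω x s := by
      simp [map_add, map_smul, halt]
    rw [h]; module

def Rel (z w : X) : Prop := ∃ g ∈ transvectionGroup ω S, g z = w

lemma Rel.rfl' {z : X} : Rel ω S z z := ⟨1, one_mem _, rfl⟩

lemma Rel.symm' {z w : X} (h : Rel ω S z w) : Rel ω S w z := by
  obtain ⟨g, hg, hgz⟩ := h
  exact ⟨g⁻¹, inv_mem hg, by rw [← hgz]; exact Equiv.Perm.inv_apply_self g z⟩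

lemma Rel.trans' {z w u : X} (h : Rel ω S z w) (h2 : Rel ω S w u) : Rel ω S z u := by
  obtain ⟨g, hg, hgz⟩ := h
  obtain ⟨g2, hg2, hg2w⟩ := h2
  exact ⟨g2 * g, mul_mem hg2 hg, by rw [Equiv.Perm.mul_apply, hgz, hg2w]⟩

lemma moveA (halt : ∀ x, ω x x = 0) {s z : X} (hs : s ∈ S) (h : ω z s ≠ 0) (c : K) :
    Rel ω S z (z + c • s) := by
  by_cases hc : c = 0
  · simpa [hc] using Rel.rfl' ω S
  · refine ⟨tperm ω halt s (c / ω z s), ?_, ?_⟩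
    · exact Subgroup.subset_closure ⟨s, hs, c / ω z s, div_ne_zero hc h, fun x => rfl⟩
    · show z + (c / ω z s * ω z s) • s = z + c • s
      rw [div_mul_cancel₀ _ h]


lemma omega_add_smul (z r b : X) (k : K) : ω (z + k • r) b = ω z b + k * ω r b := by
  simp [map_add, map_smul]

lemma add_mul_ne {a u k : K} (hu : u ≠ 0) (hk : k ≠ -a / u) : a + k * u ≠ 0 := by
  intro h
  apply hk
  field_simp
  linear_combination h

lemma MI (halt : ∀ x, ω x x = 0) (hK : ∃ k : K, k ≠ 0 ∧ k ≠ 1)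
    {C : Set X} (hCS : C ⊆ S) {s : X} (hs : s ∈ C) (c : K) {r : X}
    (hchain : Relation.ReflTransGen (fun u v => u ∈ C ∧ v ∈ C ∧ ω u v ≠ 0) s r) :
    ∀ z, ω z r ≠ 0 → ω (z + c • s) r ≠ 0 → Rel ω S z (z + c • s) := by
  induction hchain with
  | refl => intro z hz _; exact moveA ω S halt (hCS hs) hz c
  | @tail b r hchain hstep ih =>
    obtain ⟨hbC, hrC, hbr⟩ := hstep
    intro z hzr hwr
    have hrb : ω r b ≠ 0 := by rw [skew ω halt]; simpa using hbr
    by_cases hcommon : ω z b ≠ 0 ∧ ω (z + c • s) b ≠ 0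
    · exact ih z hcommon.1 hcommon.2
    · -- one of them is zero
      have hone : ω z b = 0 ∨ ω (z + c • s) b = 0 := by tauto
      -- choose k avoiding 0 and the relevant quotient
      have key : ∀ k : K, k ≠ 0 → ω (z + k • r) b ≠ 0 → ω ((z + k • r) + c • s) b ≠ 0 →
          Rel ω S z (z + c • s) := by
        intro k hk0 h1 h2
        have m1 : Rel ω S z (z + k • r) := moveA ω S halt (hCS hrC) hzr k
        have m2 : Rel ω S (z + k • r) ((z + k • r) + c • s) := ih (z + k • r) h1 h2
        have hlast : ω ((z + k • r) + c • s) r ≠ 0 := by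
          have : ω ((z + k • r) + c • s) r = ω (z + c • s) r + k * ω r r := by
            simp only [map_add, map_smul, LinearMap.add_apply, LinearMap.smul_apply,
              smul_eq_mul]; ring
          rw [this, halt, mul_zero, add_zero]
          exact hwr
        have m3 : Rel ω S ((z + k • r) + c • s) (((z + k • r) + c • s) + (-k) • r) :=
          moveA ω S halt (hCS hrC) hlast (-k)
        have heq : ((z + k • r) + c • s) + (-k) • r = z + c • s := by module
        rw [heq] at m3
        exact ((m1.trans' ω S) m2).trans' ω S m3
      rcases hone with h0 | h0
      · obtain ⟨k, hk0, hkq⟩ := exists_ne_ne (K := K) hK 0 (-(ω (z + c • s) b) / ω r b)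
        refine key k hk0 ?_ ?_
        · rw [omega_add_smul, h0, zero_add]
          exact mul_ne_zero hk0 hrb
        · have : ω ((z + k • r) + c • s) b = ω (z + c • s) b + k * ω r b := by
            simp only [map_add, map_smul, LinearMap.add_apply, LinearMap.smul_apply,
              smul_eq_mul]; ring
          rw [this]
          exact add_mul_ne hrb hkq
      · obtain ⟨k, hk0, hkq⟩ := exists_ne_ne (K := K) hK 0 (-(ω z b) / ω r b)
        refine key k hk0 ?_ ?_
        · rw [omega_add_smul]
          exact add_mul_ne hrb hkq
        · have : ω ((z + k • r) + c • s) b = ω (z + c • s) b + k * ω r b := by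
            simp only [map_add, map_smul, LinearMap.add_apply, LinearMap.smul_apply,
              smul_eq_mul]; ring
          rw [this, h0, zero_add]
          exact mul_ne_zero hk0 hrb


/-- One-term transitivity: within a connected set `C ⊆ S`, if `z` and `z + c•s`
are both non-orthogonal to `C`, they are in the same orbit. -/
lemma moveM (halt : ∀ x, ω x x = 0) (hK : ∃ k : K, k ≠ 0 ∧ k ≠ 1)
    {C : Set X} (hCS : C ⊆ S)
    (hconn : ∀ a ∈ C, ∀ b ∈ C,
      Relation.ReflTransGen (fun u v => u ∈ C ∧ v ∈ C ∧ ω u v ≠ 0) a b)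
    {s : X} (hs : s ∈ C) (c : K) (z : X)
    (hz : ∃ a ∈ C, ω z a ≠ 0) (hw : ∃ b ∈ C, ω (z + c • s) b ≠ 0) :
    Rel ω S z (z + c • s) := by
  by_cases hcommon : ∃ r ∈ C, ω z r ≠ 0 ∧ ω (z + c • s) r ≠ 0
  · obtain ⟨r, hrC, h1, h2⟩ := hcommon
    exact MI ω S halt hK hCS hs c (hconn s hs r hrC) z h1 h2
  · push_neg at hcommon
    obtain ⟨a, haC, hza⟩ := hz
    obtain ⟨b, hbC, hwb⟩ := hw
    have hwa : ω (z + c • s) a = 0 := hcommon a haC hza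
    have hzb : ω z b = 0 := by
      by_contra h; exact hwb (hcommon b hbC h)
    have keya : ω z a + c * ω s a = 0 := by rw [← omega_add_smul]; exact hwa
    have keyb : c * ω s b = ω (z + c • s) b := by
      rw [omega_add_smul, hzb, zero_add]
    have hsa : ω a s ≠ 0 := by
      rw [skew ω halt, neg_ne_zero]
      intro h
      rw [h, mul_zero, add_zero] at keya
      exact hza keya
    have hzs : ω z s = 0 := by
      by_contra h
      have hws : ω (z + c • s) s = ω z s := by
        rw [omega_add_smul, halt, mul_zero, add_zero]
      exact (hws ▸ h) (hcommon s hs h)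
    -- choose k
    obtain ⟨k, hk0, hkb⟩ : ∃ k : K, k ≠ 0 ∧ ω (z + c • s) b + k * ω a b ≠ 0 := by
      by_cases hab : ω a b = 0
      · exact ⟨1, one_ne_zero, by rw [hab, mul_zero, add_zero]; exact hwb⟩
      · obtain ⟨k, hk0, hkq⟩ := exists_ne_ne (K := K) hK 0 (-(ω (z + c • s) b) / ω a b)
        exact ⟨k, hk0, add_mul_ne hab hkq⟩
    have m1 : Rel ω S z (z + k • a) := moveA ω S halt (hCS haC) hza k
    have hz1s : ω (z + k • a) s ≠ 0 := by
      rw [omega_add_smul, hzs, zero_add]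
      exact mul_ne_zero hk0 hsa
    have m2 : Rel ω S (z + k • a) ((z + k • a) + c • s) := moveA ω S halt (hCS hs) hz1s c
    have heq : ((z + k • a) + c • s) + (-k) • a = z + c • s := by module
    have h1 : ω ((z + k • a) + c • s) b ≠ 0 := by
      have : ω ((z + k • a) + c • s) b = ω (z + c • s) b + k * ω a b := by
        simp only [map_add, map_smul, LinearMap.add_apply, LinearMap.smul_apply,
          smul_eq_mul]; ring
      rw [this]; exact hkb
    have h2 : ω (((z + k • a) + c • s) + (-k) • a) b ≠ 0 := by rw [heq]; exact hwb
    have m3 := MI ω S halt hK hCS haC (-k) (hconn a haC b hbC) ((z + k • a) + c • s) h1 h2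
    rw [heq] at m3
    exact (m1.trans' ω S m2).trans' ω S m3

/-- Two-term move through an orthogonal intermediate point. -/
lemma moveM2 (halt : ∀ x, ω x x = 0) (hK : ∃ k : K, k ≠ 0 ∧ k ≠ 1)
    {C : Set X} (hCS : C ⊆ S)
    (hconn : ∀ a ∈ C, ∀ b ∈ C,
      Relation.ReflTransGen (fun u v => u ∈ C ∧ v ∈ C ∧ ω u v ≠ 0) a b)
    {s t : X} (hs : s ∈ C) (ht : t ∈ C) (c d : K) (hd : d ≠ 0) (z : X)
    (hz : ∃ a ∈ C, ω z a ≠ 0)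
    (hperp : ∀ r ∈ C, ω (z + c • s) r = 0)
    (hw : ∃ b ∈ C, ω ((z + c • s) + d • t) b ≠ 0) :
    Rel ω S z ((z + c • s) + d • t) := by
  obtain ⟨b, hbC, hwb⟩ := hw
  have htb : ω t b ≠ 0 := by
    intro h
    apply hwb
    rw [omega_add_smul, hperp b hbC, h, mul_zero, add_zero]
  by_cases hzt : ∃ r ∈ C, ω (z + d • t) r ≠ 0
  · have m1 : Rel ω S z (z + d • t) := moveM ω S halt hK hCS hconn ht d z hz hzt
    have m2 : Rel ω S (z + d • t) ((z + d • t) + c • s) :=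
      moveM ω S halt hK hCS hconn hs c (z + d • t) hzt (by
        refine ⟨b, hbC, ?_⟩
        have : ((z + d • t) + c • s) = ((z + c • s) + d • t) := by module
        rw [this]; exact hwb)
    have : ((z + d • t) + c • s) = ((z + c • s) + d • t) := by module
    rw [this] at m2
    exact m1.trans' ω S m2
  · push_neg at hzt
    obtain ⟨d', hd'0, hd'd⟩ := exists_ne_ne (K := K) hK 0 d
    have hne : d' - d ≠ 0 := sub_ne_zero.mpr hd'd
    have h1 : ω (z + d' • t) b ≠ 0 := by
      have : ω (z + d' • t) b = ω (z + d • t) b + (d' - d) * ω t b := by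
        simp only [map_add, map_smul, LinearMap.add_apply, LinearMap.smul_apply,
          smul_eq_mul]; ring
      rw [this, hzt b hbC, zero_add]
      exact mul_ne_zero hne htb
    have m1 : Rel ω S z (z + d' • t) :=
      moveM ω S halt hK hCS hconn ht d' z hz ⟨b, hbC, h1⟩
    have h2 : ω ((z + d' • t) + c • s) b ≠ 0 := by
      have : ω ((z + d' • t) + c • s) b = ω (z + c • s) b + d' * ω t b := by
        simp only [map_add, map_smul, LinearMap.add_apply, LinearMap.smul_apply,
          smul_eq_mul]; ring
      rw [this, hperp b hbC, zero_add]
      exact mul_ne_zero hd'0 htb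
    have m2 : Rel ω S (z + d' • t) ((z + d' • t) + c • s) :=
      moveM ω S halt hK hCS hconn hs c (z + d' • t) ⟨b, hbC, h1⟩ ⟨b, hbC, h2⟩
    have heq : ((z + d' • t) + c • s) + (d - d') • t = (z + c • s) + d • t := by module
    have m3 : Rel ω S ((z + d' • t) + c • s) ((z + c • s) + d • t) := by
      have := moveM ω S halt hK hCS hconn ht (d - d') ((z + d' • t) + c • s)
        ⟨b, hbC, h2⟩ (by rw [heq]; exact ⟨b, hbC, hwb⟩)
      rwa [heq] at this
    exact (m1.trans' ω S m2).trans' ω S m3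


lemma sum_orth (r : X) (l : List (K × X)) (h : ∀ p ∈ l, p.1 = 0 ∨ ω p.2 r = 0) :
    ω (l.map fun p => p.1 • p.2).sum r = 0 := by
  induction l with
  | nil => simp
  | cons p t ih =>
    simp only [List.map_cons, List.sum_cons, map_add, LinearMap.add_apply, map_smul,
      LinearMap.smul_apply, smul_eq_mul]
    rcases h p (List.mem_cons_self) with h0 | h0 <;>
      rw [h0, ih fun q hq => h q (List.mem_cons_of_mem p hq)] <;> ring

/-- Transitivity within a connected set `C`. -/
lemma thmT (halt : ∀ x, ω x x = 0) (hK : ∃ k : K, k ≠ 0 ∧ k ≠ 1)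
    {C : Set X} (hCS : C ⊆ S)
    (hconn : ∀ a ∈ C, ∀ b ∈ C,
      Relation.ReflTransGen (fun u v => u ∈ C ∧ v ∈ C ∧ ω u v ≠ 0) a b) :
    ∀ (n : ℕ) (l : List (K × X)) (z : X), l.length ≤ n → (∀ p ∈ l, p.2 ∈ C) →
      (∃ a ∈ C, ω z a ≠ 0) →
      (∃ b ∈ C, ω (z + (l.map fun p => p.1 • p.2).sum) b ≠ 0) →
      Rel ω S z (z + (l.map fun p => p.1 • p.2).sum) := by
  intro n
  induction n with
  | zero =>
    intro l z hlen _ _ _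
    rw [List.length_eq_zero_iff.mp (Nat.le_zero.mp hlen)]
    simpa using Rel.rfl' ω S
  | succ n ih =>
    intro l z hlen hmem hz hw
    match l with
    | [] => simpa using Rel.rfl' ω S
    | p :: t =>
      obtain ⟨c, s⟩ := p
      simp only [List.map_cons, List.sum_cons] at hw ⊢
      have hsC : s ∈ C := hmem (c, s) (List.mem_cons_self)
      have htmem : ∀ q ∈ t, q.2 ∈ C := fun q hq => hmem q (List.mem_cons_of_mem _ hq)
      have htlen : t.length ≤ n := Nat.le_of_succ_le_succ hlen
      have hsum : z + (c • s + (t.map fun p => p.1 • p.2).sum)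
          = (z + c • s) + (t.map fun p => p.1 • p.2).sum := by module
      by_cases h1 : ∃ a ∈ C, ω (z + c • s) a ≠ 0
      · have m1 : Rel ω S z (z + c • s) := moveM ω S halt hK hCS hconn hsC c z hz h1
        have m2 := ih t (z + c • s) htlen htmem h1 (by rw [← hsum]; exact hw)
        rw [hsum]
        exact m1.trans' ω S m2
      · push_neg at h1
        -- find q in t with nonzero coefficient and q.2 non-orthogonal to C
        have hq : ∃ q ∈ t, q.1 ≠ 0 ∧ ∃ r ∈ C, ω q.2 r ≠ 0 := by
          by_contra hcon
          push_neg at hcon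
          obtain ⟨b, hbC, hwb⟩ := hw
          apply hwb
          have hts : ω (t.map fun p => p.1 • p.2).sum b = 0 := by
            apply sum_orth
            intro q hqt
            rcases eq_or_ne q.1 0 with h | h
            · exact Or.inl h
            · exact Or.inr (hcon q hqt h b hbC)
          have h2 : ω (z + (c • s + (t.map fun p => p.1 • p.2).sum)) b
              = ω (z + c • s) b + ω (t.map fun p => p.1 • p.2).sum b := by
            simp only [map_add, LinearMap.add_apply]; ring
          rw [h2, h1 b hbC, hts, add_zero]
        obtain ⟨q, hqt, hq1, r₀, hr₀C, hqr₀⟩ := hq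
        obtain ⟨t₁, t₂, ht12⟩ := List.append_of_mem hqt
        -- z' = z + c•s + q.1•q.2
        have hz'r₀ : ω ((z + c • s) + q.1 • q.2) r₀ ≠ 0 := by
          rw [omega_add_smul, h1 r₀ hr₀C, zero_add]
          exact mul_ne_zero hq1 hqr₀
        have hqC : q.2 ∈ C := htmem q hqt
        have m1 : Rel ω S z ((z + c • s) + q.1 • q.2) :=
          moveM2 ω S halt hK hCS hconn hsC hqC c q.1 hq1 z hz h1 ⟨r₀, hr₀C, hz'r₀⟩
        -- recurse on t₁ ++ t₂
        have hlen' : (t₁ ++ t₂).length ≤ n := by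
          have : t.length = (t₁ ++ t₂).length + 1 := by
            rw [ht12]; simp [List.length_append]; ring
          omega
        have hmem' : ∀ p ∈ t₁ ++ t₂, p.2 ∈ C := by
          intro p hp
          apply htmem
          rw [ht12]
          rcases List.mem_append.mp hp with h | h
          · exact List.mem_append.mpr (Or.inl h)
          · exact List.mem_append.mpr (Or.inr (List.mem_cons_of_mem _ h))
        have hsum2 : ((z + c • s) + q.1 • q.2) + ((t₁ ++ t₂).map fun p => p.1 • p.2).sum
            = z + (c • s + (t.map fun p => p.1 • p.2).sum) := by
          rw [ht12]
          simp only [List.map_append, List.sum_append, List.map_cons, List.sum_cons]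
          abel
        have m2 := ih (t₁ ++ t₂) ((z + c • s) + q.1 • q.2) hlen' hmem'
          ⟨r₀, hr₀C, hz'r₀⟩ (by rw [hsum2]; exact hw)
        rw [hsum2] at m2
        exact m1.trans' ω S m2


def compSet (s₀ : S) : Set X :=
  {t | ∃ ht : t ∈ S, (transGraph ω S).connectedComponentMk ⟨t, ht⟩ =
    (transGraph ω S).connectedComponentMk s₀}

lemma comp_of_ne (halt : ∀ x, ω x x = 0) {a b : S} (h : ω a.1 b.1 ≠ 0) :
    (transGraph ω S).connectedComponentMk a = (transGraph ω S).connectedComponentMk b := by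
  rcases eq_or_ne a b with rfl | hne
  · rfl
  · exact SimpleGraph.ConnectedComponent.sound
      ((SimpleGraph.fromRel_adj _ a b).mpr ⟨hne, Or.inl h⟩).reachable

lemma compSet_sub (s₀ : S) : compSet ω S s₀ ⊆ S := fun _ h => h.1

lemma compSet_closed (halt : ∀ x, ω x x = 0) (s₀ : S) :
    ∀ u ∈ S, ∀ v ∈ compSet ω S s₀, ω u v ≠ 0 → u ∈ compSet ω S s₀ := by
  intro u hu v hv hne
  obtain ⟨hvS, hmk⟩ := hv
  exact ⟨hu, (comp_of_ne ω S halt (a := ⟨u, hu⟩) (b := ⟨v, hvS⟩) hne).trans hmk⟩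

lemma walk_chain (halt : ∀ x, ω x x = 0) (s₀ : S) :
    ∀ (u v : S), (transGraph ω S).Walk u v → u.1 ∈ compSet ω S s₀ →
      Relation.ReflTransGen
        (fun a b => a ∈ compSet ω S s₀ ∧ b ∈ compSet ω S s₀ ∧ ω a b ≠ 0) u.1 v.1 := by
  intro u v w
  induction w with
  | nil => intro _; exact Relation.ReflTransGen.refl
  | @cons u w v hadj p ih =>
    intro huC
    have hne : ω u.1 w.1 ≠ 0 := by
      rcases ((SimpleGraph.fromRel_adj _ u w).mp hadj).2 with h | h
      · exact h
      · rw [skew ω halt]; simpa using h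
    have hwC : w.1 ∈ compSet ω S s₀ := by
      obtain ⟨huS, hmk⟩ := huC
      refine ⟨w.2, ?_⟩
      have h1 : (transGraph ω S).connectedComponentMk ⟨w.1, w.2⟩ =
          (transGraph ω S).connectedComponentMk u := by
        have := comp_of_ne ω S halt (a := w) (b := u) (by rw [skew ω halt]; simpa using hne)
        simpa using this
      rw [h1]
      have h2 : (⟨u.1, huS⟩ : S) = u := Subtype.ext rfl
      rw [← h2]
      exact hmk
    exact Relation.ReflTransGen.head ⟨huC, hwC, hne⟩ (ih hwC)

lemma compSet_conn (halt : ∀ x, ω x x = 0) (s₀ : S) :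
    ∀ a ∈ compSet ω S s₀, ∀ b ∈ compSet ω S s₀,
      Relation.ReflTransGen
        (fun u v => u ∈ compSet ω S s₀ ∧ v ∈ compSet ω S s₀ ∧ ω u v ≠ 0) a b := by
  intro a ha b hb
  obtain ⟨haS, hmka⟩ := ha
  obtain ⟨hbS, hmkb⟩ := hb
  have hreach : (transGraph ω S).Reachable ⟨a, haS⟩ ⟨b, hbS⟩ :=
    SimpleGraph.ConnectedComponent.eq.mp (hmka.trans hmkb.symm)
  obtain ⟨w⟩ := hreach
  exact walk_chain ω S halt s₀ ⟨a, haS⟩ ⟨b, hbS⟩ w ⟨haS, hmka⟩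

lemma span_orth_left (U : Set X) (r : X) (h : ∀ u ∈ U, ω u r = 0) {v : X}
    (hv : v ∈ Submodule.span K U) : ω v r = 0 := by
  have hle : Submodule.span K U ≤ LinearMap.ker (ω.flip r) :=
    Submodule.span_le.mpr fun u hu => LinearMap.mem_ker.mpr (by
      rw [LinearMap.flip_apply]; exact h u hu)
  simpa using hle hv

lemma span_orth_right (U : Set X) (r : X) (h : ∀ u ∈ U, ω r u = 0) {v : X}
    (hv : v ∈ Submodule.span K U) : ω r v = 0 := by
  have hle : Submodule.span K U ≤ LinearMap.ker (ω r) :=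
    Submodule.span_le.mpr fun u hu => LinearMap.mem_ker.mpr (h u hu)
  simpa using hle hv

lemma symp (halt : ∀ x, ω x x = 0) {g : Equiv.Perm X} (hg : g ∈ transvectionGroup ω S) :
    ∀ a b, ω (g a) (g b) = ω a b := by
  refine Subgroup.closure_induction ?_ ?_ ?_ ?_ hg
  · rintro f ⟨s, hsS, k, hk, hf⟩ a b
    rw [hf a, hf b]
    simp only [map_add, map_smul, LinearMap.add_apply, LinearMap.smul_apply, smul_eq_mul]
    rw [halt s, skew ω halt s b]
    ring
  · intro a b; rfl
  · intro f g' _ _ ihf ihg a b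
    rw [Equiv.Perm.mul_apply, Equiv.Perm.mul_apply, ihf, ihg]
  · intro f _ ihf a b
    have := ihf (f⁻¹ a) (f⁻¹ b)
    rw [Equiv.Perm.apply_inv_self, Equiv.Perm.apply_inv_self] at this
    exact this.symm

lemma span_inv (halt : ∀ x, ω x x = 0) {C : Set X} (hCS : C ⊆ S)
    (hclosed : ∀ u ∈ S, ∀ v ∈ C, ω u v ≠ 0 → u ∈ C)
    {g : Equiv.Perm X} (hg : g ∈ transvectionGroup ω S) :
    ∀ v ∈ Submodule.span K C, g v ∈ Submodule.span K C ∧ g⁻¹ v ∈ Submodule.span K C := by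
  refine Subgroup.closure_induction ?_ ?_ ?_ ?_ hg
  · rintro f ⟨s, hsS, k, hk, hf⟩ v hv
    by_cases hvs : ω v s = 0
    · have h1 : f v = v := by rw [hf v, hvs, mul_zero, zero_smul, add_zero]
      have h2 : f⁻¹ v = v := f.injective (by rw [Equiv.Perm.apply_inv_self, h1])
      rw [h1, h2]; exact ⟨hv, hv⟩
    · have hsC : s ∈ C := by
        by_contra hsC
        apply hvs
        apply span_orth_left ω (v := v) C s _ hv
        intro u huC
        by_contra hus
        exact hsC (hclosed s hsS u huC (by rw [skew ω halt]; simpa using hus))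
      have hsW : s ∈ Submodule.span K C := Submodule.subset_span hsC
      constructor
      · rw [hf v]
        exact Submodule.add_mem _ hv (Submodule.smul_mem _ _ hsW)
      · have hfw : f (v - (k * ω v s) • s) = v := by
          rw [hf (v - (k * ω v s) • s)]
          have : ω (v - (k * ω v s) • s) s = ω v s := by
            simp only [map_sub, map_smul, LinearMap.sub_apply, LinearMap.smul_apply,
              smul_eq_mul, halt s, mul_zero, sub_zero]
          rw [this]
          module
        have : f⁻¹ v = v - (k * ω v s) • s :=
          f.injective (by rw [Equiv.Perm.apply_inv_self, hfw])
        rw [this]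
        exact Submodule.sub_mem _ hv (Submodule.smul_mem _ _ hsW)
  · intro v hv
    constructor <;> simpa using hv
  · intro f g' _ _ ihf ihg v hv
    constructor
    · rw [Equiv.Perm.mul_apply]
      exact (ihf _ (ihg v hv).1).1
    · rw [mul_inv_rev, Equiv.Perm.mul_apply]
      exact (ihg _ (ihf v hv).2).2
  · intro f _ ihf v hv
    refine ⟨(ihf v hv).2, ?_⟩
    rw [inv_inv]
    exact (ihf v hv).1

lemma inv_orth (halt : ∀ x, ω x x = 0) {C : Set X} (hCS : C ⊆ S)
    (hclosed : ∀ u ∈ S, ∀ v ∈ C, ω u v ≠ 0 → u ∈ C)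
    {g : Equiv.Perm X} (hg : g ∈ transvectionGroup ω S) {z : X}
    (hz : ∀ t ∈ C, ω z t = 0) : ∀ r ∈ C, ω (g z) r = 0 := by
  intro r hr
  have h1 : r = g (g⁻¹ r) := (Equiv.Perm.apply_inv_self g r).symm
  rw [h1, symp ω S halt hg]
  exact span_orth_right ω C _ hz
    (span_inv ω S halt hCS hclosed hg r (Submodule.subset_span hr)).2

/-- The set of elements of `S` whose component is non-orthogonal to `z`. -/
def Rset (z : X) : Set X :=
  {s : X | ∃ hs : s ∈ S, ∃ t : S, (transGraph ω S).connectedComponentMk t =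
    (transGraph ω S).connectedComponentMk ⟨s, hs⟩ ∧ ω z t.1 ≠ 0}

lemma mem_compSet_of {s₀ t : S}
    (h : (transGraph ω S).connectedComponentMk t = (transGraph ω S).connectedComponentMk s₀) :
    t.1 ∈ compSet ω S s₀ := ⟨t.2, h⟩

lemma Rdir (halt : ∀ x, ω x x = 0) {g : Equiv.Perm X} (hg : g ∈ transvectionGroup ω S)
    {z s : X} (h : s ∈ Rset ω S z) : s ∈ Rset ω S (g z) := by
  obtain ⟨hs, t, hmk, hne⟩ := h
  by_contra hcon
  have hall : ∀ r ∈ compSet ω S ⟨s, hs⟩, ω (g z) r = 0 := by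
    intro r hr
    obtain ⟨hrS, hmkr⟩ := hr
    by_contra hne'
    exact hcon ⟨hs, ⟨⟨r, hrS⟩, hmkr, hne'⟩⟩
  have h2 := inv_orth ω S halt (compSet_sub ω S ⟨s, hs⟩) (compSet_closed ω S halt ⟨s, hs⟩)
    (inv_mem hg) hall t.1 (mem_compSet_of ω S hmk)
  rw [Equiv.Perm.inv_apply_self] at h2
  exact hne h2

lemma Rinv (halt : ∀ x, ω x x = 0) {g : Equiv.Perm X} (hg : g ∈ transvectionGroup ω S)
    (z : X) : Rset ω S (g z) = Rset ω S z := by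
  ext s
  constructor
  · intro h
    have := Rdir ω S halt (inv_mem hg) h
    rwa [Equiv.Perm.inv_apply_self] at this
  · exact Rdir ω S halt hg

lemma fwd (halt : ∀ x, ω x x = 0) {g : Equiv.Perm X} (hg : g ∈ transvectionGroup ω S) :
    ∀ z, g z - z ∈ Submodule.span K (Rset ω S z) := by
  refine Subgroup.closure_induction ?_ ?_ ?_ ?_ hg
  · rintro f ⟨s, hsS, k, hk, hf⟩ z
    have h1 : f z - z = (k * ω z s) • s := by rw [hf z]; abel
    rw [h1]
    rcases eq_or_ne (ω z s) 0 with h | h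
    · rw [h, mul_zero, zero_smul]; exact Submodule.zero_mem _
    · exact Submodule.smul_mem _ _ (Submodule.subset_span ⟨hsS, ⟨⟨s, hsS⟩, rfl, h⟩⟩)
  · intro z; simpa using Submodule.zero_mem _
  · intro f f' hf hf' ihf ihf' z
    have h1 : (f * f') z - z = (f (f' z) - f' z) + (f' z - z) := by
      rw [Equiv.Perm.mul_apply]; abel
    rw [h1]
    refine Submodule.add_mem _ ?_ (ihf' z)
    have := ihf (f' z)
    rwa [Rinv ω S halt hf'] at this
  · intro f hf ihf z
    have h1 : f⁻¹ z - z = -(f (f⁻¹ z) - f⁻¹ z) := by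
      rw [Equiv.Perm.apply_inv_self]; abel
    rw [h1]
    refine Submodule.neg_mem _ ?_
    have := ihf (f⁻¹ z)
    rwa [Rinv ω S halt (inv_mem hf)] at this

lemma rep {U : Set X} {v : X} (hv : v ∈ Submodule.span K U) :
    ∃ l : List (K × X), (∀ p ∈ l, p.2 ∈ U) ∧ v = (l.map fun p => p.1 • p.2).sum := by
  refine Submodule.span_induction ?_ ?_ ?_ ?_ hv
  · intro u hu
    exact ⟨[(1, u)], by simpa using hu, by simp⟩
  · exact ⟨[], by simp, by simp⟩
  · rintro a b _ _ ⟨l1, h1, rfl⟩ ⟨l2, h2, rfl⟩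
    refine ⟨l1 ++ l2, ?_, by simp [List.map_append, List.sum_append]⟩
    intro p hp
    rcases List.mem_append.mp hp with h | h
    · exact h1 p h
    · exact h2 p h
  · rintro a x _ ⟨l, hl, rfl⟩
    refine ⟨l.map fun p => (a * p.1, p.2), ?_, ?_⟩
    · intro p hp
      obtain ⟨q, hq, rfl⟩ := List.mem_map.mp hp
      exact hl q hq
    · rw [List.smul_sum, List.map_map, List.map_map]
      congr 1
      apply List.map_congr_left
      intro p _
      simp [Function.comp, smul_smul]

lemma comp_orth (halt : ∀ x, ω x x = 0) (s₀ : S) {r u : X} (hr : r ∈ compSet ω S s₀)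
    (hu : u ∈ S) (huC : u ∉ compSet ω S s₀) : ω r u = 0 := by
  by_contra h
  refine huC (compSet_closed ω S halt s₀ u hu r hr ?_)
  rw [skew ω halt]
  simpa using h

lemma mainG (halt : ∀ x, ω x x = 0) (hK : ∃ k : K, k ≠ 0 ∧ k ≠ 1) :
    ∀ (n : ℕ) (l : List (K × X)) (x : X), l.length ≤ n →
      (∀ p ∈ l, p.2 ∈ Rset ω S x ∧ p.2 ∈ Rset ω S (x + (l.map fun p => p.1 • p.2).sum)) →
      Rel ω S x (x + (l.map fun p => p.1 • p.2).sum) := by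
  intro n
  induction n with
  | zero =>
    intro l x hlen _
    rw [List.length_eq_zero_iff.mp (Nat.le_zero.mp hlen)]
    simpa using Rel.rfl' ω S
  | succ n ih =>
    intro l x hlen hmem
    cases l with
    | nil => simpa using Rel.rfl' ω S
    | cons p t =>
      classical
      obtain ⟨hpx, hpy⟩ := hmem p (List.mem_cons_self)
      obtain ⟨hsS, tx, hmkx, hωx⟩ := hpx
      set s₀ : S := (⟨p.2, hsS⟩ : S) with hs₀
      set C := compSet ω S s₀ with hCdef
      set t₁ := t.filter (fun q => decide (q.2 ∈ C)) with ht₁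
      set t₂ := t.filter (fun q => !decide (q.2 ∈ C)) with ht₂
      have hperm : (t₁ ++ t₂).Perm t := List.filter_append_perm _ t
      have hsumt : ((t₁ ++ t₂).map fun p => p.1 • p.2).sum
          = (t.map fun p => p.1 • p.2).sum := (hperm.map _).sum_eq
      have hy : x + ((p :: t).map fun p => p.1 • p.2).sum
          = (x + ((p :: t₁).map fun p => p.1 • p.2).sum)
            + (t₂.map fun p => p.1 • p.2).sum := by
        simp only [List.map_cons, List.sum_cons, ← hsumt, List.map_append, List.sum_append]
        abel
      have ht₁C : ∀ q ∈ (p :: t₁), q.2 ∈ C := by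
        intro q hq
        rcases List.mem_cons.mp hq with rfl | hq'
        · exact ⟨hsS, rfl⟩
        · have := List.of_mem_filter hq'
          simpa using this
      have ht₂t : ∀ q ∈ t₂, q ∈ t := fun q hq => List.mem_of_mem_filter hq
      have ht₂C : ∀ q ∈ t₂, q.2 ∉ C := by
        intro q hq
        have := List.of_mem_filter hq
        simpa using this
      have htS : ∀ q ∈ t₂, q.2 ∈ S := by
        intro q hq
        obtain ⟨hs, _⟩ := (hmem q (List.mem_cons_of_mem _ (ht₂t q hq))).1
        exact hs
      -- the witness for x
      have txC : tx.1 ∈ C := mem_compSet_of ω S hmkx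
      -- the witness for y
      obtain ⟨hsS', ty, hmky, hωy⟩ := hpy
      have tyC : ty.1 ∈ C := mem_compSet_of ω S hmky
      -- Σ t₂ is orthogonal to ty
      have horth2 : ω (t₂.map fun p => p.1 • p.2).sum ty.1 = 0 := by
        apply sum_orth
        intro q hq
        right
        rw [skew ω halt]
        rw [comp_orth ω S halt s₀ tyC (htS q hq) (ht₂C q hq)]
        exact neg_zero
      have hωz₁y : ω ((x + ((p :: t₁).map fun p => p.1 • p.2).sum)) ty.1 ≠ 0 := by
        intro h
        apply hωy
        rw [hy]
        simp only [map_add, LinearMap.add_apply]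
        simp only [map_add, LinearMap.add_apply] at h
        rw [horth2]
        simpa using h
      have m1 : Rel ω S x (x + ((p :: t₁).map fun p => p.1 • p.2).sum) :=
        thmT ω S halt hK (compSet_sub ω S s₀) (compSet_conn ω S halt s₀)
          (p :: t₁).length (p :: t₁) x le_rfl ht₁C ⟨tx.1, txC, hωx⟩ ⟨ty.1, tyC, hωz₁y⟩
      have hlen₂ : t₂.length ≤ n := le_trans (List.length_filter_le _ t)
        (Nat.le_of_succ_le_succ hlen)
      have hmem₂ : ∀ q ∈ t₂, q.2 ∈ Rset ω S (x + ((p :: t₁).map fun p => p.1 • p.2).sum) ∧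
          q.2 ∈ Rset ω S ((x + ((p :: t₁).map fun p => p.1 • p.2).sum)
            + (t₂.map fun p => p.1 • p.2).sum) := by
        intro q hq
        obtain ⟨hqx, hqy⟩ := hmem q (List.mem_cons_of_mem _ (ht₂t q hq))
        constructor
        · obtain ⟨hqS, tq, hmkq, hωq⟩ := hqx
          have htqC : tq.1 ∉ C := by
            intro htq
            apply ht₂C q hq
            obtain ⟨htqS, hmk2⟩ := htq
            refine ⟨hqS, ?_⟩
            have : (transGraph ω S).connectedComponentMk tq =
                (transGraph ω S).connectedComponentMk s₀ := by
              rw [show tq = (⟨tq.1, htqS⟩ : S) from Subtype.ext rfl]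
              exact hmk2
            rw [← hmkq]
            exact this
          have horth1 : ω (((p :: t₁).map fun p => p.1 • p.2).sum) tq.1 = 0 := by
            apply sum_orth
            intro q' hq'
            right
            exact comp_orth ω S halt s₀ (ht₁C q' hq') tq.2 htqC
          refine ⟨hqS, tq, hmkq, ?_⟩
          simp only [map_add, LinearMap.add_apply]
          rw [horth1, add_zero]
          exact hωq
        · rw [← hy]
          exact hqy
      have m2 := ih t₂ (x + ((p :: t₁).map fun p => p.1 • p.2).sum) hlen₂ hmem₂
      rw [hy]
      exact m1.trans' ω S m2

end Stmt19Aux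

/-- if `K` has more than two elements and `S` spans `X`, then
`x, y ∈ X` are in the same `Tr(S)`-orbit iff `y - x` belongs to the span of
the union of all components `S_i` of `G(S)` such that neither `ω(x, S_i)` nor
`ω(y, S_i)` is `{0}`. -/
theorem stmt19 {K X : Type*} [Field K] [AddCommGroup X] [Module K X]
    [FiniteDimensional K X]
    (ω : X →ₗ[K] X →ₗ[K] K) (halt : ∀ x, ω x x = 0)
    (hK : ∃ k : K, k ≠ 0 ∧ k ≠ 1)
    (S : Set X) (hspan : Submodule.span K S = ⊤)
    (x y : X) :
    (∃ g ∈ transvectionGroup ω S, g x = y) ↔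
      y - x ∈ Submodule.span K (relevantUnion ω S x y) := by
  constructor
  · rintro ⟨g, hg, hgxy⟩
    have h1 : y - x ∈ Submodule.span K (Stmt19Aux.Rset ω S x) := by
      rw [← hgxy]
      exact Stmt19Aux.fwd ω S halt hg x
    refine Submodule.span_mono ?_ h1
    intro s hs
    obtain ⟨hsS, t, hmk, hω⟩ := hs
    have hsy : s ∈ Stmt19Aux.Rset ω S y := by
      rw [← hgxy, Stmt19Aux.Rinv ω S halt hg]
      exact ⟨hsS, t, hmk, hω⟩
    obtain ⟨hsS2, t2, hmk2, hω2⟩ := hsy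
    exact ⟨hsS, ⟨t, hmk, hω⟩, ⟨t2, hmk2, hω2⟩⟩
  · intro h
    obtain ⟨l, hlU, hsum⟩ := Stmt19Aux.rep h
    have hy : y = x + (l.map fun p => p.1 • p.2).sum := by rw [← hsum]; abel
    have hmem : ∀ p ∈ l, p.2 ∈ Stmt19Aux.Rset ω S x ∧
        p.2 ∈ Stmt19Aux.Rset ω S (x + (l.map fun p => p.1 • p.2).sum) := by
      intro p hp
      obtain ⟨hsS, h1, h2⟩ := hlU p hp
      exact ⟨⟨hsS, h1⟩, by rw [← hy]; exact ⟨hsS, h2⟩⟩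
    have hrel := Stmt19Aux.mainG ω S halt hK l.length l x le_rfl hmem
    rw [hy]
    exact hrel
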